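/- Let η̃ > η > 0, let c, q, μ̂, Z : S → ℝ, τ > 0, K > 0, and set G(s) = (μ̂(s) − μ(s))/(τ·σ(s)). Assume: (far zone) for every s ∈ S with |μ(s) − c(s)| > η̃ one has (μ̂(s) − c(s))·sgn(μ(s) − c(s)) ≥ σ(s)·(K + Z(s)); (a) for every s with 0 ≤ c(s) − μ(s) ≤ η, G(s) − q(s) < 0; (b) for every s with 0 ≤ c(s) − μ(s) ≤ η̃, G(s) − q(s) < η/(τ·𝔒); (c) for every s ∈ S, Z(s)/τ + q(s) > −K/τ. Then {s : μ̂(s) > c(s) + q(s)·τ·σ(s)} ⊆ {s : μ(s) > c(s)}, and {s : μ(s) < c(s)} ⊆ {s : μ̂(s) < c(s) + q(s)·τ·σ(s)}. (Paper: Lemma A.2 (SCoPES Lemma), part (ii).) -/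

import Mathlib

/-- Lemma A.2 (SCoPES Lemma), part (ii). -/
theorem scopes_lemma_part_ii
    {S : Type*} [MetricSpace S]
    (μ σ c q μhat Z : S → ℝ) (o O τ K η ηt : ℝ)
    (ho : 0 < o) (hσo : ∀ s, o ≤ σ s) (hσO : ∀ s, σ s ≤ O)
    (hμbd : ∃ M, ∀ s, |μ s| ≤ M)
    (hτ : 0 < τ) (hK : 0 < K) (hη : 0 < η) (hηηt : η < ηt)
    (hfar : ∀ s, ηt < |μ s - c s| →
      (μhat s - c s) * Real.sign (μ s - c s) ≥ σ s * (K + Z s))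
    (ha : ∀ s, 0 ≤ c s - μ s → c s - μ s ≤ η →
      (μhat s - μ s) / (τ * σ s) - q s < 0)
    (hb : ∀ s, 0 ≤ c s - μ s → c s - μ s ≤ ηt →
      (μhat s - μ s) / (τ * σ s) - q s < η / (τ * O))
    (hc : ∀ s, Z s / τ + q s > -(K / τ)) :
    {s | μhat s > c s + q s * τ * σ s} ⊆ {s | μ s > c s} ∧
    {s | μ s < c s} ⊆ {s | μhat s < c s + q s * τ * σ s} := by
  have hσpos : ∀ s, 0 < σ s := fun s => lt_of_lt_of_le ho (hσo s)
  -- key claim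
  have key : ∀ s, μ s ≤ c s → μhat s < c s + q s * τ * σ s := by
    intro s hle
    have hτσ : 0 < τ * σ s := mul_pos hτ (hσpos s)
    have h0 : 0 ≤ c s - μ s := by linarith
    by_cases h1 : c s - μ s ≤ η
    · have := ha s h0 h1
      have h2 : (μhat s - μ s) / (τ * σ s) < q s := by linarith
      have h3 : μhat s - μ s < q s * (τ * σ s) := (div_lt_iff₀ hτσ).mp h2
      nlinarith
    · push_neg at h1
      by_cases h2 : c s - μ s ≤ ηt
      · have hO : 0 < O := lt_of_lt_of_le (hσpos s) (hσO s)
        have := hb s h0 h2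
        have h3 : (μhat s - μ s) / (τ * σ s) < q s + η / (τ * O) := by linarith
        have h4 : μhat s - μ s < (q s + η / (τ * O)) * (τ * σ s) :=
          (div_lt_iff₀ hτσ).mp h3
        have h5 : η / (τ * O) * (τ * σ s) ≤ η := by
          rw [div_mul_eq_mul_div, div_le_iff₀ (mul_pos hτ hO)]
          nlinarith [hσO s, mul_nonneg (mul_nonneg hη.le hτ.le) (sub_nonneg.mpr (hσO s))]
        nlinarith
      · push_neg at h2
        have habs : ηt < |μ s - c s| := by
          rw [abs_sub_comm, abs_of_pos (by linarith)]; linarith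
        have hsgn : Real.sign (μ s - c s) = -1 :=
          Real.sign_of_neg (by linarith [hηηt, hη] : μ s - c s < 0)
        have hf := hfar s habs
        rw [hsgn] at hf
        -- hf : (μhat s - c s) * (-1) ≥ σ s * (K + Z s)
        have hq : -(K + Z s) < τ * q s := by
          have h5 := hc s
          have h6 : Z s / τ * τ = Z s := div_mul_cancel₀ _ (ne_of_gt hτ)
          have h7 : K / τ * τ = K := div_mul_cancel₀ _ (ne_of_gt hτ)
          have h8 := (mul_lt_mul_iff_of_pos_right hτ).mpr h5
          nlinarith
        nlinarith [hσpos s, mul_lt_mul_of_pos_left hq (hσpos s)]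
  refine ⟨fun s hs => ?_, fun s hs => ?_⟩
  · simp only [Set.mem_setOf_eq] at *
    by_contra h
    push_neg at h
    exact absurd hs (not_lt.mpr (le_of_lt (key s h)))
  · exact key s (le_of_lt hs)
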